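/- Let D = {(x, λ) ∈ ℝ² : λ > 0 and x < log λ} and define g : D → ℝ by g(x, λ) = −log(log λ − x) − log λ. Then g is self-concordant on D: for every p ∈ ℝ², every direction v ∈ ℝ², and every s ∈ ℝ such that p + s·v ∈ D, the function φ(s) = g(p + s·v) satisfies |φ'''(s)| ≤ 2·(φ''(s))^{3/2}. -/

import Mathlib

/-- First derivative of the line-restricted barrier. -/
noncomputable def barrierD1 (P Q A B : ℝ) : ℝ → ℝ := fun t =>
  -((B / (A + t * B) - Q) / (Real.log (A + t * B) - (P + t * Q))) - B / (A + t * B)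

/-- Second derivative of the line-restricted barrier. -/
noncomputable def barrierD2 (P Q A B : ℝ) : ℝ → ℝ := fun t =>
  ((B / (A + t * B) - Q) / (Real.log (A + t * B) - (P + t * Q))) ^ 2
    + B ^ 2 / ((A + t * B) ^ 2 * (Real.log (A + t * B) - (P + t * Q)))
    + B ^ 2 / (A + t * B) ^ 2

/-- Third derivative of the line-restricted barrier. -/
noncomputable def barrierD3 (P Q A B : ℝ) : ℝ → ℝ := fun t =>
  -(2 * ((B / (A + t * B) - Q) / (Real.log (A + t * B) - (P + t * Q))) ^ 3
    + 3 * ((B / (A + t * B) - Q) / (Real.log (A + t * B) - (P + t * Q)))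
        * (B ^ 2 / ((A + t * B) ^ 2 * (Real.log (A + t * B) - (P + t * Q))))
    + 2 * B ^ 3 / ((A + t * B) ^ 3 * (Real.log (A + t * B) - (P + t * Q)))
    + 2 * B ^ 3 / (A + t * B) ^ 3)

lemma affine_hasDerivAt (A B t : ℝ) : HasDerivAt (fun t : ℝ => A + t * B) B t := by
  simpa using ((hasDerivAt_id t).mul_const B).const_add A

lemma barrier_hasDerivAt (P Q A B t : ℝ) (h1 : 0 < A + t * B)
    (h2 : 0 < Real.log (A + t * B) - (P + t * Q)) :
    HasDerivAt (fun t => -Real.log (Real.log (A + t * B) - (P + t * Q)) - Real.log (A + t * B))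
      (barrierD1 P Q A B t) t := by
  have ha := affine_hasDerivAt A B t
  have hl := affine_hasDerivAt P Q t
  have hu : HasDerivAt (fun t => Real.log (A + t * B) - (P + t * Q)) (B / (A + t * B) - Q) t :=
    (ha.log h1.ne').sub hl
  exact ((hu.log h2.ne').neg).sub (ha.log h1.ne')

set_option maxHeartbeats 1000000 in
lemma barrierD1_hasDerivAt (P Q A B t : ℝ) (h1 : 0 < A + t * B)
    (h2 : 0 < Real.log (A + t * B) - (P + t * Q)) :
    HasDerivAt (barrierD1 P Q A B) (barrierD2 P Q A B t) t := by
  have ha := affine_hasDerivAt A B t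
  have hl := affine_hasDerivAt P Q t
  have hu : HasDerivAt (fun t => Real.log (A + t * B) - (P + t * Q)) (B / (A + t * B) - Q) t :=
    (ha.log h1.ne').sub hl
  have hq : HasDerivAt (fun t : ℝ => B / (A + t * B))
      ((0 * (A + t * B) - B * B) / (A + t * B) ^ 2) t :=
    (hasDerivAt_const t B).div ha h1.ne'
  have hn : HasDerivAt (fun t : ℝ => B / (A + t * B) - Q)
      ((0 * (A + t * B) - B * B) / (A + t * B) ^ 2) t := hq.sub_const Q
  have hw : HasDerivAt (fun t => (B / (A + t * B) - Q) / (Real.log (A + t * B) - (P + t * Q))) _ t :=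
    hn.div hu h2.ne'
  have hXne : (A + t * B) ≠ 0 := h1.ne'
  have hUne : (Real.log (A + t * B) - (P + t * Q)) ≠ 0 := h2.ne'
  unfold barrierD1 barrierD2
  refine ((hw.neg).sub hq).congr_deriv ?_
  field_simp
  ring

set_option maxHeartbeats 1000000 in
lemma barrierD2_hasDerivAt (P Q A B t : ℝ) (h1 : 0 < A + t * B)
    (h2 : 0 < Real.log (A + t * B) - (P + t * Q)) :
    HasDerivAt (barrierD2 P Q A B) (barrierD3 P Q A B t) t := by
  have ha := affine_hasDerivAt A B t
  have hl := affine_hasDerivAt P Q t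
  have hu : HasDerivAt (fun t => Real.log (A + t * B) - (P + t * Q)) (B / (A + t * B) - Q) t :=
    (ha.log h1.ne').sub hl
  have hq : HasDerivAt (fun t : ℝ => B / (A + t * B))
      ((0 * (A + t * B) - B * B) / (A + t * B) ^ 2) t :=
    (hasDerivAt_const t B).div ha h1.ne'
  have hn : HasDerivAt (fun t : ℝ => B / (A + t * B) - Q)
      ((0 * (A + t * B) - B * B) / (A + t * B) ^ 2) t := hq.sub_const Q
  have hw : HasDerivAt (fun t => (B / (A + t * B) - Q) / (Real.log (A + t * B) - (P + t * Q))) _ t :=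
    hn.div hu h2.ne'
  have hXne : (A + t * B) ≠ 0 := h1.ne'
  have hUne : (Real.log (A + t * B) - (P + t * Q)) ≠ 0 := h2.ne'
  have c1 : HasDerivAt
      (fun t => ((B / (A + t * B) - Q) / (Real.log (A + t * B) - (P + t * Q))) ^ 2)
      (-(2 * ((B / (A + t * B) - Q) / (Real.log (A + t * B) - (P + t * Q))) ^ 3)
        - 2 * ((B / (A + t * B) - Q) / (Real.log (A + t * B) - (P + t * Q)))
            * (B ^ 2 / ((A + t * B) ^ 2 * (Real.log (A + t * B) - (P + t * Q))))) t := by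
    refine (hw.pow 2).congr_deriv ?_
    simp only [Nat.cast_ofNat, show (2:ℕ) - 1 = 1 from rfl, pow_one]
    field_simp
    ring
  have c2 : HasDerivAt
      (fun t => B ^ 2 / ((A + t * B) ^ 2 * (Real.log (A + t * B) - (P + t * Q))))
      (-(2 * B ^ 3 / ((A + t * B) ^ 3 * (Real.log (A + t * B) - (P + t * Q))))
        - ((B / (A + t * B) - Q) / (Real.log (A + t * B) - (P + t * Q)))
            * (B ^ 2 / ((A + t * B) ^ 2 * (Real.log (A + t * B) - (P + t * Q))))) t := by
    convert (show HasDerivAt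
        (fun t => B ^ 2 / ((A + t * B) ^ 2 * (Real.log (A + t * B) - (P + t * Q)))) _ t from
      (hasDerivAt_const t (B ^ 2)).div ((ha.pow 2).mul hu)
      (mul_ne_zero (pow_ne_zero 2 hXne) hUne)) using 1
    simp only [Pi.pow_apply, Nat.cast_ofNat, show (2:ℕ) - 1 = 1 from rfl, pow_one]
    field_simp
    ring
  have c3 : HasDerivAt (fun t : ℝ => B ^ 2 / (A + t * B) ^ 2)
      (-(2 * B ^ 3 / (A + t * B) ^ 3)) t := by
    convert (show HasDerivAt (fun t : ℝ => B ^ 2 / (A + t * B) ^ 2) _ t from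
      (hasDerivAt_const t (B ^ 2)).div (ha.pow 2) (pow_ne_zero 2 hXne)) using 1
    simp only [Nat.cast_ofNat, show (2:ℕ) - 1 = 1 from rfl, pow_one]
    field_simp
    ring
  have := (c1.add c2).add c3
  unfold barrierD2 barrierD3
  refine this.congr_deriv ?_
  ring

/-- The basic algebraic self-concordance inequality. -/
lemma sc_ineq (w c d : ℝ) :
    |-(2 * w ^ 3 + 3 * w * c ^ 2 + 2 * c ^ 2 * d + 2 * d ^ 3)|
      ≤ 2 * (w ^ 2 + c ^ 2 + d ^ 2) ^ ((3 : ℝ) / 2) := by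
  have hR : (0 : ℝ) ≤ w ^ 2 + c ^ 2 + d ^ 2 := by positivity
  have key : (2 * w ^ 3 + 3 * w * c ^ 2 + 2 * c ^ 2 * d + 2 * d ^ 3) ^ 2
      ≤ 4 * (w ^ 2 + c ^ 2 + d ^ 2) ^ 3 := by
    nlinarith [mul_nonneg (sq_nonneg c) (sq_nonneg (2 * d ^ 2 + 2 * c ^ 2 - 3 * w * d)),
      sq_nonneg (2 * w ^ 2 * d - w * c ^ 2), mul_nonneg (sq_nonneg w) (sq_nonneg (c ^ 2)),
      mul_nonneg (mul_nonneg (sq_nonneg w) (sq_nonneg c)) (sq_nonneg d),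
      mul_nonneg (sq_nonneg (w * d)) (sq_nonneg (w - d)),
      mul_nonneg (sq_nonneg w) (sq_nonneg (d ^ 2))]
  rw [abs_neg]
  have h1 : |2 * w ^ 3 + 3 * w * c ^ 2 + 2 * c ^ 2 * d + 2 * d ^ 3|
      = Real.sqrt ((2 * w ^ 3 + 3 * w * c ^ 2 + 2 * c ^ 2 * d + 2 * d ^ 3) ^ 2) :=
    (Real.sqrt_sq_eq_abs _).symm
  have h2 : (w ^ 2 + c ^ 2 + d ^ 2) ^ ((3 : ℝ) / 2)
      = Real.sqrt ((w ^ 2 + c ^ 2 + d ^ 2) ^ 3) := by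
    rw [show ((3 : ℝ) / 2) = (3 : ℝ) * (1 / 2) by ring, Real.rpow_mul hR, Real.sqrt_eq_rpow,
      show ((3 : ℝ) : ℝ) = ((3 : ℕ) : ℝ) by norm_num, Real.rpow_natCast]
  have h5 : 2 * Real.sqrt ((w ^ 2 + c ^ 2 + d ^ 2) ^ 3)
      = Real.sqrt (4 * (w ^ 2 + c ^ 2 + d ^ 2) ^ 3) := by
    rw [show (4 : ℝ) * (w ^ 2 + c ^ 2 + d ^ 2) ^ 3
        = 2 ^ 2 * (w ^ 2 + c ^ 2 + d ^ 2) ^ 3 by ring,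
      Real.sqrt_mul (by positivity), Real.sqrt_sq (by norm_num : (0:ℝ) ≤ 2)]
  rw [h1, h2, h5]
  exact Real.sqrt_le_sqrt key

lemma barrier_final (P Q A B s : ℝ) (hX : 0 < A + s * B)
    (hU : 0 < Real.log (A + s * B) - (P + s * Q)) :
    |barrierD3 P Q A B s| ≤ 2 * (barrierD2 P Q A B s) ^ ((3 : ℝ) / 2) := by
  simp only [barrierD2, barrierD3]
  set X : ℝ := A + s * B with hXdef
  set U : ℝ := Real.log X - (P + s * Q) with hUdef
  have hXne : X ≠ 0 := hX.ne'
  have hUne : U ≠ 0 := hU.ne'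
  have hsne : Real.sqrt U ≠ 0 := (Real.sqrt_pos.mpr hU).ne'
  have hsq : Real.sqrt U ^ 2 = U := Real.sq_sqrt hU.le
  have e1 : B ^ 2 / (X ^ 2 * U) = (B / (X * Real.sqrt U)) ^ 2 := by
    rw [div_pow, mul_pow, hsq]
  have e2 : 2 * B ^ 3 / (X ^ 3 * U) = 2 * (B / (X * Real.sqrt U)) ^ 2 * (B / X) := by
    rw [div_pow, mul_pow, hsq]
    field_simp
  have e3 : 2 * B ^ 3 / X ^ 3 = 2 * (B / X) ^ 3 := by
    rw [div_pow]
    ring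
  have e4 : B ^ 2 / X ^ 2 = (B / X) ^ 2 := (div_pow B X 2).symm
  rw [e1, e2, e3, e4]
  exact sc_ineq ((B / X - Q) / U) (B / (X * Real.sqrt U)) (B / X)

/-- The log-barrier term `g(x, λ) = −log(log λ − x) − log λ` associated with an
exponential constraint is self-concordant on its domain
`D = {(x, λ) : λ > 0 ∧ x < log λ}`: along every line through the domain,
`|φ'''(s)| ≤ 2·(φ''(s))^{3/2}` where `φ(s) = g(p + s·v)`. -/
theorem log_barrier_self_concordant
    (g : ℝ × ℝ → ℝ)
    (hg : ∀ p : ℝ × ℝ, 0 < p.2 → p.1 < Real.log p.2 →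
      g p = -Real.log (Real.log p.2 - p.1) - Real.log p.2) :
    ∀ (p v : ℝ × ℝ) (s : ℝ),
      0 < (p + s • v).2 → (p + s • v).1 < Real.log (p + s • v).2 →
      |iteratedDeriv 3 (fun t : ℝ => g (p + t • v)) s| ≤
        2 * (iteratedDeriv 2 (fun t : ℝ => g (p + t • v)) s) ^ ((3 : ℝ) / 2) := by
  intro p v s h2 h1
  obtain ⟨P, A⟩ := p
  obtain ⟨Q, B⟩ := v
  simp only [Prod.snd_add, Prod.fst_add, Prod.smul_snd, Prod.smul_fst, smul_eq_mul] at h2 h1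
  set φ : ℝ → ℝ := fun t => g ((P, A) + t • (Q, B)) with hφ_def
  set U : Set ℝ := {t | 0 < A + t * B ∧ 0 < Real.log (A + t * B) - (P + t * Q)} with hU_def
  have hcomp : ∀ t : ℝ, ((P, A) + t • (Q, B)) = (P + t * Q, A + t * B) := by
    intro t; simp [Prod.ext_iff, smul_eq_mul]
  have hsU : s ∈ U := by
    constructor
    · exact h2
    · linarith
  -- U is open
  have hca : Continuous fun t : ℝ => A + t * B :=
    continuous_const.add (continuous_id.mul continuous_const)
  have h1o : IsOpen {t : ℝ | 0 < A + t * B} := isOpen_lt continuous_const hca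
  have hUo : IsOpen U := by
    have hcu : ContinuousOn (fun t : ℝ => Real.log (A + t * B) - (P + t * Q))
        {t : ℝ | 0 < A + t * B} := by
      apply ContinuousOn.sub
      · exact Real.continuousOn_log.comp hca.continuousOn
          (fun t ht => by simpa using (ne_of_gt ht))
      · exact (continuous_const.add (continuous_id.mul continuous_const)).continuousOn
    have h := hcu.isOpen_inter_preimage (t := Set.Ioi (0 : ℝ)) h1o isOpen_Ioi
    convert h using 1
    rfl
  -- φ agrees with the explicit barrier on U
  have hφeq : Set.EqOn φ
      (fun t => -Real.log (Real.log (A + t * B) - (P + t * Q)) - Real.log (A + t * B)) U := by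
    intro t ht
    have h := hg ((P, A) + t • (Q, B)) (by rw [hcomp t]; exact ht.1)
      (by rw [hcomp t]; simpa using (sub_pos.mp ht.2))
    rw [hφ_def]
    simp only [hcomp t] at h ⊢
    simpa using h
  -- derivatives on U
  have hD1 : Set.EqOn (deriv φ) (barrierD1 P Q A B) U := by
    intro t ht
    exact ((barrier_hasDerivAt P Q A B t ht.1 ht.2).congr_of_eventuallyEq
      (Filter.eventuallyEq_of_mem (hUo.mem_nhds ht) hφeq)).deriv
  have hD2 : Set.EqOn (deriv (deriv φ)) (barrierD2 P Q A B) U := by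
    intro t ht
    exact ((barrierD1_hasDerivAt P Q A B t ht.1 ht.2).congr_of_eventuallyEq
      (Filter.eventuallyEq_of_mem (hUo.mem_nhds ht) hD1)).deriv
  have hD3 : deriv (deriv (deriv φ)) s = barrierD3 P Q A B s :=
    ((barrierD2_hasDerivAt P Q A B s hsU.1 hsU.2).congr_of_eventuallyEq
      (Filter.eventuallyEq_of_mem (hUo.mem_nhds hsU) hD2)).deriv
  have e2 : iteratedDeriv 2 φ s = barrierD2 P Q A B s := by
    rw [show (2 : ℕ) = 1 + 1 from rfl, iteratedDeriv_succ, iteratedDeriv_one]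
    exact hD2 hsU
  have e3 : iteratedDeriv 3 φ s = barrierD3 P Q A B s := by
    rw [show (3 : ℕ) = 2 + 1 from rfl, iteratedDeriv_succ,
      show (2 : ℕ) = 1 + 1 from rfl, iteratedDeriv_succ, iteratedDeriv_one]
    exact hD3
  rw [e2, e3]
  exact barrier_final P Q A B s hsU.1 hsU.2
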